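/- Let K be a field, n ≥ 2 an integer, and let q, z_1, …, z_n ∈ K be nonzero elements such that z_1, …, z_{n−1} are pairwise distinct and, for all i, j ∈ {1,…,n}: q²z_i ≠ z_j, z_i + q·z_j ≠ 0, and z_i + q³·z_j ≠ 0. Then for every j ∈ {1,…,n−1} one has ∑_{k=1}^{n−1} μ_k(z_1,…,z_{n−1};z_n) · 1/(1−q^{−2}z_k/z_j) + ∑_{k=1}^{n−1} ν_k(z_1,…,z_{n−1};z_n) · 1/(1+q^{−1}z_k/z_j) = 1/(1−q^{−2}z_n/z_j). -/

import Mathlib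

open Finset Polynomial

lemma residue_sum {K : Type*} [Field K] {ι : Type*} [DecidableEq ι] (s : Finset ι) (v : ι → K)
    (hvs : Set.InjOn v s) (P : Polynomial K) (hdeg : P.degree < ((s.card - 1 : ℕ) : WithBot ℕ)) :
    ∑ i ∈ s, P.eval (v i) * ∏ j ∈ s.erase i, (v i - v j)⁻¹ = 0 := by
  rcases s.eq_empty_or_nonempty with rfl | hs
  · simp
  have hd2 : P.degree < (s.card : WithBot ℕ) :=
    lt_of_lt_of_le hdeg (Nat.cast_le.2 (Nat.sub_le _ _))
  have hP : P = Lagrange.interpolate s v (fun i => P.eval (v i)) :=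
    Lagrange.eq_interpolate hvs hd2
  have h0 : P.coeff (s.card - 1) = 0 := Polynomial.coeff_eq_zero_of_degree_lt hdeg
  have hco : (Lagrange.interpolate s v (fun i => P.eval (v i))).coeff (s.card - 1)
      = ∑ i ∈ s, P.eval (v i) * ∏ j ∈ s.erase i, (v i - v j)⁻¹ := by
    rw [Lagrange.interpolate_apply, Polynomial.finset_sum_coeff]
    refine Finset.sum_congr rfl fun i hi => ?_
    have hb : Lagrange.basis s v i
        = C (∏ j ∈ s.erase i, (v i - v j)⁻¹) * ∏ j ∈ s.erase i, (X - C (v j)) := by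
      rw [Lagrange.basis]
      simp_rw [Lagrange.basisDivisor]
      rw [Finset.prod_mul_distrib, map_prod]
    rw [hb, ← mul_assoc, ← Polynomial.C_mul, Polynomial.coeff_C_mul]
    have hM : (∏ j ∈ s.erase i, (X - C (v j))).Monic :=
      monic_prod_of_monic _ _ fun j _ => monic_X_sub_C _
    have hdeg' : (∏ j ∈ s.erase i, (X - C (v j))).natDegree = s.card - 1 := by
      rw [Polynomial.natDegree_prod _ _ fun j _ => X_sub_C_ne_zero (v j)]
      simp [Polynomial.natDegree_X_sub_C, Finset.card_erase_of_mem hi]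
    rw [← hdeg', hM.coeff_natDegree, mul_one]
  rw [← hco, ← hP, h0]

lemma erase_disjSum_inl {α β : Type*} [DecidableEq α] [DecidableEq β]
    (s : Finset α) (t : Finset β) (a : α) :
    (s.disjSum t).erase (Sum.inl a) = (s.erase a).disjSum t := by
  ext x
  cases x <;> simp [Finset.mem_erase, and_comm]

lemma erase_disjSum_inr {α β : Type*} [DecidableEq α] [DecidableEq β]
    (s : Finset α) (t : Finset β) (b : β) :
    (s.disjSum t).erase (Sum.inr b) = s.disjSum (t.erase b) := by
  ext x
  cases x <;> simp [Finset.mem_erase, and_comm]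

lemma prod_erase_eq' {K : Type*} [Field K] {ι : Type*} [DecidableEq ι]
    (s : Finset ι) (f : ι → K) (k : ι) (hk : k ∈ s) (h : f k ≠ 0) :
    ∏ i ∈ s.erase k, f i = (∏ i ∈ s, f i) * (f k)⁻¹ := by
  rw [← Finset.prod_erase_mul s f hk, mul_inv_cancel_right₀ h]

/-- The coefficient function `μ_k(z_1,…,z_{n-1};t)` of Khoroshkin–Shapiro. -/
noncomputable def muKS {K : Type*} [Field K] (n : ℕ) (q : K) (z : ℕ → K) (k : ℕ) (t : K) : K :=
  (∏ i ∈ (Icc 1 (n - 1)).erase k, (t - z i) / (z k - z i)) *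
    ∏ i ∈ Icc 1 (n - 1),
      ((t + q * z i) * (z k - q ^ 2 * z i) * (z k + q ^ 3 * z i)) /
        ((z k + q * z i) * (t - q ^ 2 * z i) * (t + q ^ 3 * z i))

/-- The coefficient function `ν_k(z_1,…,z_{n-1};t)` of Khoroshkin–Shapiro. -/
noncomputable def nuKS {K : Type*} [Field K] (n : ℕ) (q : K) (z : ℕ → K) (k : ℕ) (t : K) : K :=
  -q ^ n * (∏ i ∈ (Icc 1 (n - 1)).erase k, (t + q * z i) / (z k - z i)) *
    ∏ i ∈ Icc 1 (n - 1),
      ((t - z i) * (z k + q * z i) * (z k - q ^ 2 * z i)) /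
        ((q * z k + z i) * (t - q ^ 2 * z i) * (t + q ^ 3 * z i))

set_option maxHeartbeats 1600000 in
/-- Khoroshkin–Shapiro, Proposition 8, first family of columns of the linear system
`(μ,ν)·M = (V_{q²}, V_{-q³})`. -/
theorem weight_function_munu_first_columns
    (K : Type*) [Field K] (n : ℕ) (hn : 2 ≤ n) (q : K) (z : ℕ → K)
    (hq : q ≠ 0) (hz : ∀ i ∈ Icc 1 n, z i ≠ 0)
    (hdist : ∀ i ∈ Icc 1 (n - 1), ∀ j ∈ Icc 1 (n - 1), i ≠ j → z i ≠ z j)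
    (hq2 : ∀ i ∈ Icc 1 n, ∀ j ∈ Icc 1 n, q ^ 2 * z i ≠ z j)
    (hq1 : ∀ i ∈ Icc 1 n, ∀ j ∈ Icc 1 n, z i + q * z j ≠ 0)
    (hq3 : ∀ i ∈ Icc 1 n, ∀ j ∈ Icc 1 n, z i + q ^ 3 * z j ≠ 0) :
    ∀ j ∈ Icc 1 (n - 1),
      (∑ k ∈ Icc 1 (n - 1), muKS n q z k (z n) * (1 / (1 - (q ^ 2)⁻¹ * z k / z j))) +
      (∑ k ∈ Icc 1 (n - 1), nuKS n q z k (z n) * (1 / (1 + q⁻¹ * z k / z j)))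
      = 1 / (1 - (q ^ 2)⁻¹ * z n / z j) := by
  intro j hj
  obtain ⟨d, rfl⟩ : ∃ d, n = d + 2 := ⟨n - 2, by omega⟩
  have hE21 : d + 2 - 1 = d + 1 := rfl
  simp only [hE21] at hj hdist ⊢
  set E : Finset ℕ := Icc 1 (d + 1) with hE
  set t : K := z (d + 2) with ht
  have hEsub : ∀ {i : ℕ}, i ∈ E → i ∈ Icc 1 (d + 2) := by
    intro i hi; rw [hE, Finset.mem_Icc] at hi; rw [Finset.mem_Icc]; omega
  have hnn : d + 2 ∈ Icc 1 (d + 2) := by rw [Finset.mem_Icc]; omega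
  have hzj : z j ≠ 0 := hz j (hEsub hj)
  have hzE : ∀ i ∈ E, z i ≠ 0 := fun i hi => hz i (hEsub hi)
  have hb1 : ∀ k ∈ E, ∀ i ∈ E.erase k, z k - z i ≠ 0 := by
    intro k hk i hi
    rw [Finset.mem_erase] at hi
    exact sub_ne_zero_of_ne (hdist k hk i hi.2 (fun h => hi.1 h.symm))
  have ha2 : ∀ i ∈ E, t + q * z i ≠ 0 := fun i hi => hq1 _ hnn i (hEsub hi)
  have ha3 : ∀ i ∈ E, t - q ^ 2 * z i ≠ 0 :=
    fun i hi => sub_ne_zero_of_ne (Ne.symm (hq2 i (hEsub hi) _ hnn))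
  have ha4 : ∀ i ∈ E, t + q ^ 3 * z i ≠ 0 := fun i hi => hq3 _ hnn i (hEsub hi)
  have hb2 : ∀ k ∈ E, ∀ i ∈ E, z k + q * z i ≠ 0 :=
    fun k hk i hi => hq1 k (hEsub hk) i (hEsub hi)
  have hb3 : ∀ k ∈ E, ∀ i ∈ E, z k - q ^ 2 * z i ≠ 0 :=
    fun k hk i hi => sub_ne_zero_of_ne (Ne.symm (hq2 i (hEsub hi) k (hEsub hk)))
  have hb5 : ∀ k ∈ E, ∀ i ∈ E, q * z k + z i ≠ 0 := by
    intro k hk i hi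
    have := hq1 i (hEsub hi) k (hEsub hk)
    rwa [add_comm] at this
  have hatq : t + q * z j ≠ 0 := ha2 j hj
  have hatq2 : t - q ^ 2 * z j ≠ 0 := ha3 j hj
  -- kernel rewrites
  have hK1 : ∀ x : K, 1 / (1 - (q ^ 2)⁻¹ * x / z j) = -(q ^ 2 * z j) * (x - q ^ 2 * z j)⁻¹ := by
    intro x
    have h2 : 1 - (q ^ 2)⁻¹ * x / z j = -(x - q ^ 2 * z j) / (q ^ 2 * z j) := by
      field_simp
      ring
    rw [h2, one_div_div, div_neg, div_eq_mul_inv, neg_mul]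
  have hK2 : ∀ x : K, 1 / (1 + q⁻¹ * x / z j) = q * z j * (x + q * z j)⁻¹ := by
    intro x
    have h2 : 1 + q⁻¹ * x / z j = (x + q * z j) / (q * z j) := by
      field_simp
      ring
    rw [h2, one_div_div, div_eq_mul_inv]
  have hb4 : ∀ k ∈ E, ∀ i ∈ E, z k + q ^ 3 * z i ≠ 0 :=
    fun k hk i hi => hq3 k (hEsub hk) i (hEsub hi)
  by_cases hdg : ∃ m ∈ E, t = z m
  · -- degenerate case : t coincides with one of the z's
    obtain ⟨m, hm, htm⟩ := hdg
    have hmu0 : ∀ k ∈ E, k ≠ m → muKS (d + 2) q z k t = 0 := by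
      intro k hk hkm
      rw [muKS]
      simp only [hE21, ← hE]
      have h1 : ∏ i ∈ E.erase k, (t - z i) / (z k - z i) = 0 := by
        apply Finset.prod_eq_zero (Finset.mem_erase.mpr ⟨fun h => hkm h.symm, hm⟩)
        rw [htm, sub_self, zero_div]
      rw [h1, zero_mul]
    have hnu0 : ∀ k ∈ E, nuKS (d + 2) q z k t = 0 := by
      intro k hk
      rw [nuKS]
      simp only [hE21, ← hE]
      have h1 : ∏ i ∈ E,
          ((t - z i) * (z k + q * z i) * (z k - q ^ 2 * z i)) /
            ((q * z k + z i) * (t - q ^ 2 * z i) * (t + q ^ 3 * z i)) = 0 := by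
        apply Finset.prod_eq_zero hm
        rw [htm, sub_self, zero_mul, zero_mul, zero_div]
      rw [h1, mul_zero]
    have hmu1 : muKS (d + 2) q z m t = 1 := by
      rw [muKS]
      simp only [hE21, ← hE]
      have e1 : ∏ i ∈ E.erase m, (t - z i) / (z m - z i) = 1 := by
        apply Finset.prod_eq_one
        intro i hi
        rw [htm]
        exact div_self (hb1 m hm i hi)
      have e2 : ∏ i ∈ E,
          ((t + q * z i) * (z m - q ^ 2 * z i) * (z m + q ^ 3 * z i)) /
            ((z m + q * z i) * (t - q ^ 2 * z i) * (t + q ^ 3 * z i)) = 1 := by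
        apply Finset.prod_eq_one
        intro i hi
        rw [htm]
        exact div_self
          (mul_ne_zero (mul_ne_zero (hb2 m hm i hi) (hb3 m hm i hi)) (hb4 m hm i hi))
      rw [e1, e2, one_mul]
    rw [Finset.sum_eq_single_of_mem m hm (fun k hk hkm => by rw [hmu0 k hk hkm, zero_mul]),
        Finset.sum_eq_zero (fun k hk => by rw [hnu0 k hk, zero_mul]),
        hmu1, one_mul, add_zero, htm]
  · -- main case : t distinct from all the z's
    push_neg at hdg
    have ha1 : ∀ i ∈ E, t - z i ≠ 0 := fun i hi => sub_ne_zero_of_ne (hdg i hi)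
    classical
    set V : ℕ ⊕ (ℕ ⊕ Unit) → K := Sum.elim z (Sum.elim (fun i => -(q * z i)) fun _ => t)
      with hV
    set c : K := q ^ 2 * z j *
      ∏ i ∈ E, ((t + q * z i) * (t - z i)) / ((t - q ^ 2 * z i) * (t + q ^ 3 * z i)) with hc
    set P : Polynomial K := Polynomial.C c *
      ((∏ i ∈ E.erase j, (X - Polynomial.C (q ^ 2 * z i))) *
        ∏ i ∈ E, (X + Polynomial.C (q ^ 3 * z i))) with hP
    have hcardE : E.card = d + 1 := by rw [hE, Nat.card_Icc]; omega
    have hcard : (E.disjSum (E.disjSum {()})).card = 2 * d + 3 := by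
      rw [Finset.card_disjSum, Finset.card_disjSum, Finset.card_singleton, hcardE]
      omega
    have hinj : Set.InjOn V ↑(E.disjSum (E.disjSum ({()} : Finset Unit))) := by
      rintro (k | k | u) hx (k' | k' | u') hy hxy <;>
        simp only [Finset.mem_coe, Finset.inl_mem_disjSum, Finset.inr_mem_disjSum] at hx hy <;>
        simp only [hV, Sum.elim_inl, Sum.elim_inr] at hxy
      · have : k = k' := by
          by_contra hne
          exact hdist k hx k' hy hne hxy
        rw [this]
      · exact absurd (by rw [hxy]; ring : z k + q * z k' = 0)
          (hq1 k (hEsub hx) k' (hEsub hy))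
      · exact absurd hxy.symm (hdg k hx)
      · exact absurd (by rw [← hxy]; ring : z k' + q * z k = 0)
          (hq1 k' (hEsub hy) k (hEsub hx))
      · have h2 : z k = z k' := by
          have h3 : q * z k = q * z k' := by
            have := hxy
            exact neg_inj.mp this
          exact mul_left_cancel₀ hq h3
        have : k = k' := by
          by_contra hne
          exact hdist k hx k' hy hne h2
        rw [this]
      · exact absurd (by rw [← hxy]; ring : t + q * z k = 0) (ha2 k hx)
      · exact absurd hxy (hdg k' hy)
      · exact absurd (by rw [hxy]; ring : t + q * z k' = 0) (ha2 k' hy)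
      · cases u; cases u'; rfl
    have hdegP : P.degree < (((E.disjSum (E.disjSum ({()} : Finset Unit))).card - 1 : ℕ) :
        WithBot ℕ) := by
      have hnd : P.natDegree ≤ 2 * d + 1 := by
        refine le_trans (Polynomial.natDegree_mul_le) ?_
        have h1 : (∏ i ∈ E.erase j, (X - Polynomial.C (q ^ 2 * z i))).natDegree ≤ d := by
          refine le_trans (Polynomial.natDegree_prod_le _ _) ?_
          have : ∀ i ∈ E.erase j, (X - Polynomial.C (q ^ 2 * z i)).natDegree = 1 :=
            fun i _ => Polynomial.natDegree_X_sub_C _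
          rw [Finset.sum_congr rfl this, Finset.sum_const, smul_eq_mul, mul_one,
            Finset.card_erase_of_mem hj, hcardE]
          omega
        have h2 : (∏ i ∈ E, (X + Polynomial.C (q ^ 3 * z i))).natDegree ≤ d + 1 := by
          refine le_trans (Polynomial.natDegree_prod_le _ _) ?_
          have : ∀ i ∈ E, (X + Polynomial.C (q ^ 3 * z i)).natDegree = 1 :=
            fun i _ => Polynomial.natDegree_X_add_C _
          rw [Finset.sum_congr rfl this, Finset.sum_const, smul_eq_mul, mul_one, hcardE]
        have h3 := Polynomial.natDegree_mul_le (p := ∏ i ∈ E.erase j,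
          (X - Polynomial.C (q ^ 2 * z i))) (q := ∏ i ∈ E, (X + Polynomial.C (q ^ 3 * z i)))
        simp only [Polynomial.natDegree_C, zero_add]
        omega
      rw [hcard]
      refine lt_of_le_of_lt (Polynomial.degree_le_natDegree) ?_
      have h4 : P.natDegree < 2 * d + 3 - 1 := by omega
      exact_mod_cast h4
    have h0 := residue_sum (E.disjSum (E.disjSum {()})) V hinj P hdegP
    rw [Finset.sum_disjSum, Finset.sum_disjSum, Finset.sum_singleton] at h0
    have Hμ : ∀ k ∈ E, P.eval (V (Sum.inl k)) *
        ∏ l ∈ (E.disjSum (E.disjSum {()})).erase (Sum.inl k), (V (Sum.inl k) - V l)⁻¹ =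
        muKS (d + 2) q z k t * (1 / (1 - (q ^ 2)⁻¹ * z k / z j)) := by
      intro k hk
      have hA1 : ∏ i ∈ E, (t - z i) ≠ 0 := Finset.prod_ne_zero_iff.mpr ha1
      have hA2 : ∏ i ∈ E, (t + q * z i) ≠ 0 := Finset.prod_ne_zero_iff.mpr ha2
      have hA3 : ∏ i ∈ E, (t - q ^ 2 * z i) ≠ 0 := Finset.prod_ne_zero_iff.mpr ha3
      have hA4 : ∏ i ∈ E, (t + q ^ 3 * z i) ≠ 0 := Finset.prod_ne_zero_iff.mpr ha4
      have hB2 : ∏ i ∈ E, (z k + q * z i) ≠ 0 := Finset.prod_ne_zero_iff.mpr (hb2 k hk)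
      have hBk : ∏ i ∈ E.erase k, (z k - z i) ≠ 0 := Finset.prod_ne_zero_iff.mpr (hb1 k hk)
      have htk : t - z k ≠ 0 := ha1 k hk
      have hkt : z k - t ≠ 0 := sub_ne_zero_of_ne fun h => (hdg k hk) h.symm
      have hkj : z k - q ^ 2 * z j ≠ 0 := hb3 k hk j hj
      rw [hK1 (z k), muKS]
      simp only [hE21, ← hE]
      simp only [hV, Sum.elim_inl, Sum.elim_inr]
      rw [erase_disjSum_inl, Finset.prod_disjSum, Finset.prod_disjSum,
        Finset.prod_singleton]
      simp only [hV, Sum.elim_inl, Sum.elim_inr, sub_neg_eq_add]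
      rw [hP]
      simp only [Polynomial.eval_mul, Polynomial.eval_prod, Polynomial.eval_sub,
        Polynomial.eval_add, Polynomial.eval_X, Polynomial.eval_C]
      rw [hc]
      simp only [Finset.prod_div_distrib, Finset.prod_mul_distrib, Finset.prod_inv_distrib]
      rw [prod_erase_eq' E (fun i => z k - q ^ 2 * z i) j hj (hb3 k hk j hj),
        prod_erase_eq' E (fun i => t - z i) k hk (ha1 k hk)]
      rw [show z k - t = -(t - z k) by ring, inv_neg]
      ring
    have Hν : ∀ k ∈ E, P.eval (V (Sum.inr (Sum.inl k))) *
        ∏ l ∈ (E.disjSum (E.disjSum {()})).erase (Sum.inr (Sum.inl k)),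
          (V (Sum.inr (Sum.inl k)) - V l)⁻¹ =
        nuKS (d + 2) q z k t * (1 / (1 + q⁻¹ * z k / z j)) := by
      intro k hk
      have hA2 : ∏ i ∈ E, (t + q * z i) ≠ 0 := Finset.prod_ne_zero_iff.mpr ha2
      have hA3 : ∏ i ∈ E, (t - q ^ 2 * z i) ≠ 0 := Finset.prod_ne_zero_iff.mpr ha3
      have hA4 : ∏ i ∈ E, (t + q ^ 3 * z i) ≠ 0 := Finset.prod_ne_zero_iff.mpr ha4
      have hB5 : ∏ i ∈ E, (q * z k + z i) ≠ 0 := Finset.prod_ne_zero_iff.mpr (hb5 k hk)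
      have hBk : ∏ i ∈ E.erase k, (z k - z i) ≠ 0 := Finset.prod_ne_zero_iff.mpr (hb1 k hk)
      have htqk : t + q * z k ≠ 0 := ha2 k hk
      have hkqj : z k + q * z j ≠ 0 := hb2 k hk j hj
      have hqd : (q : K) ^ d ≠ 0 := pow_ne_zero _ hq
      have e1 : ∏ i ∈ E.erase j, (-(q * z k) - q ^ 2 * z i)
          = (-q) ^ d * ((∏ i ∈ E, (z k + q * z i)) * (z k + q * z j)⁻¹) := by
        calc ∏ i ∈ E.erase j, (-(q * z k) - q ^ 2 * z i)
            = ∏ i ∈ E.erase j, (-q) * (z k + q * z i) :=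
              Finset.prod_congr rfl fun i _ => by ring
          _ = (-q) ^ d * ∏ i ∈ E.erase j, (z k + q * z i) := by
              rw [Finset.prod_mul_distrib, Finset.prod_const,
                Finset.card_erase_of_mem hj, hcardE, Nat.add_sub_cancel]
          _ = (-q) ^ d * ((∏ i ∈ E, (z k + q * z i)) * (z k + q * z j)⁻¹) := by
              rw [prod_erase_eq' E (fun i => z k + q * z i) j hj hkqj]
      have e2 : ∏ i ∈ E, (-(q * z k) + q ^ 3 * z i)
          = (-q) ^ (d + 1) * ∏ i ∈ E, (z k - q ^ 2 * z i) := by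
        calc ∏ i ∈ E, (-(q * z k) + q ^ 3 * z i)
            = ∏ i ∈ E, (-q) * (z k - q ^ 2 * z i) :=
              Finset.prod_congr rfl fun i _ => by ring
          _ = _ := by rw [Finset.prod_mul_distrib, Finset.prod_const, hcardE]
      have e3 : ∏ i ∈ E, (-(q * z k) - z i)⁻¹
          = (-1) ^ (d + 1) * (∏ i ∈ E, (q * z k + z i))⁻¹ := by
        calc ∏ i ∈ E, (-(q * z k) - z i)⁻¹
            = ∏ i ∈ E, (-1) * (q * z k + z i)⁻¹ := Finset.prod_congr rfl fun i _ => by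
              rw [show -(q * z k) - z i = -(q * z k + z i) by ring, inv_neg,
                neg_eq_neg_one_mul]
          _ = (-1) ^ (d + 1) * ∏ i ∈ E, (q * z k + z i)⁻¹ := by
              rw [Finset.prod_mul_distrib, Finset.prod_const, hcardE]
          _ = _ := by rw [Finset.prod_inv_distrib]
      have e4 : ∏ i ∈ E.erase k, (-(q * z k) + q * z i)⁻¹
          = ((-q) ^ d)⁻¹ * (∏ i ∈ E.erase k, (z k - z i))⁻¹ := by
        calc ∏ i ∈ E.erase k, (-(q * z k) + q * z i)⁻¹
            = ∏ i ∈ E.erase k, ((-q) * (z k - z i))⁻¹ :=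
              Finset.prod_congr rfl fun i _ => by
                exact congrArg Inv.inv (by ring)
          _ = _ := by
              simp only [mul_inv]
              rw [Finset.prod_mul_distrib, Finset.prod_const,
                Finset.card_erase_of_mem hk, hcardE, Nat.add_sub_cancel, inv_pow,
                Finset.prod_inv_distrib]
      have e5 : (-(q * z k) - t)⁻¹ = -(t + q * z k)⁻¹ := by
        rw [show -(q * z k) - t = -(t + q * z k) by ring, inv_neg]
      rw [hK2 (z k), nuKS]
      simp only [hE21, ← hE]
      simp only [hV, Sum.elim_inl, Sum.elim_inr]
      rw [erase_disjSum_inr, erase_disjSum_inl, Finset.prod_disjSum, Finset.prod_disjSum,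
        Finset.prod_singleton]
      simp only [hV, Sum.elim_inl, Sum.elim_inr, sub_neg_eq_add]
      rw [hP]
      simp only [Polynomial.eval_mul, Polynomial.eval_prod, Polynomial.eval_sub,
        Polynomial.eval_add, Polynomial.eval_X, Polynomial.eval_C, Polynomial.eval_neg]
      rw [e1, e2, e3, e4, e5, hc]
      simp only [Finset.prod_div_distrib, Finset.prod_mul_distrib]
      rw [prod_erase_eq' E (fun i => t + q * z i) k hk (ha2 k hk)]
      rw [show ((-q : K)) ^ d = (-1) ^ d * q ^ d from neg_pow q d,
        show ((-q : K)) ^ (d + 1) = (-1) ^ (d + 1) * q ^ (d + 1) from neg_pow q (d + 1)]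
      rcases Nat.even_or_odd d with hev | hod
      · rw [hev.neg_one_pow, (Even.add_one hev).neg_one_pow, pow_succ q d,
          show (q : K) ^ (d + 2) = q ^ d * q ^ 2 from by rw [pow_add]]
        generalize hw : (q : K) ^ d = w
        have hw' : w ≠ 0 := hw ▸ hqd
        field_simp
      · rw [hod.neg_one_pow, (Odd.add_one hod).neg_one_pow, pow_succ q d,
          show (q : K) ^ (d + 2) = q ^ d * q ^ 2 from by rw [pow_add]]
        generalize hw : (q : K) ^ d = w
        have hw' : w ≠ 0 := hw ▸ hqd
        field_simp
    have Ht : P.eval (V (Sum.inr (Sum.inr ()))) *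
        ∏ l ∈ (E.disjSum (E.disjSum {()})).erase (Sum.inr (Sum.inr ())),
          (V (Sum.inr (Sum.inr ())) - V l)⁻¹ =
        -(1 / (1 - (q ^ 2)⁻¹ * t / z j)) := by
      have hA1 : ∏ i ∈ E, (t - z i) ≠ 0 := Finset.prod_ne_zero_iff.mpr ha1
      have hA2 : ∏ i ∈ E, (t + q * z i) ≠ 0 := Finset.prod_ne_zero_iff.mpr ha2
      have hA3 : ∏ i ∈ E, (t - q ^ 2 * z i) ≠ 0 := Finset.prod_ne_zero_iff.mpr ha3
      have hA4 : ∏ i ∈ E, (t + q ^ 3 * z i) ≠ 0 := Finset.prod_ne_zero_iff.mpr ha4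
      rw [hK1 t]
      simp only [hV, Sum.elim_inr]
      rw [erase_disjSum_inr, erase_disjSum_inr, Finset.erase_singleton,
        Finset.prod_disjSum, Finset.prod_disjSum, Finset.prod_empty]
      simp only [hV, Sum.elim_inl, Sum.elim_inr, sub_neg_eq_add]
      rw [hP]
      simp only [Polynomial.eval_mul, Polynomial.eval_prod, Polynomial.eval_sub,
        Polynomial.eval_add, Polynomial.eval_X, Polynomial.eval_C]
      rw [prod_erase_eq' E (fun i => t - q ^ 2 * z i) j hj (ha3 j hj)]
      rw [hc]
      simp only [Finset.prod_div_distrib, Finset.prod_mul_distrib, Finset.prod_inv_distrib]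
      field_simp
    rw [Finset.sum_congr rfl Hμ, Finset.sum_congr rfl Hν, Ht] at h0
    linear_combination h0
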